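/- Let u > −1 and v be real numbers with 1 − 4(1+u)v(1−v) > 0 and set Ω := √(1 − 4(1+u)v(1−v)). Then Φ(0,u,v) = 1, and for every z ∈ [0,1) at which the denominator of Φ is nonzero, the function z ↦ Φ(z,u,v) is differentiable at z with derivative v(1+u)·Φ(z,u,v)² + (1−v)/(1−z)². In other words, the explicit function Φ solves the Riccati differential equation ∂Φ/∂z = v(1+u)Φ² + (1−v)/(1−z)² with initial value Φ(0,u,v) = 1. -/

import Mathlib

/-- `Ω = √(1 − 4(1+u)v(1−v))`. -/
noncomputable def OmegaR (u v : ℝ) : ℝ := Real.sqrt (1 - 4 * (1 + u) * v * (1 - v))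

/-- The denominator of `Φ(z,u,v)`:
`(Ω + 1 − 2v(1+u) + (1−z)^Ω·(Ω − 1 + 2v(1+u)))·(1−z)`, with `(1−z)^Ω = exp(Ω·log(1−z))`. -/
noncomputable def denPhi (z u v : ℝ) : ℝ :=
  (OmegaR u v + 1 - 2 * v * (1 + u)
    + Real.exp (OmegaR u v * Real.log (1 - z)) * (OmegaR u v - 1 + 2 * v * (1 + u)))
    * (1 - z)

/-- The explicit solution (4):
`Φ(z,u,v) = (Ω + 1 − 2v + (1−z)^Ω·(Ω − 1 + 2v)) / ((Ω + 1 − 2v(1+u) + (1−z)^Ω·(Ω − 1 + 2v(1+u)))·(1−z))`. -/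
noncomputable def PhiR (z u v : ℝ) : ℝ :=
  (OmegaR u v + 1 - 2 * v
    + Real.exp (OmegaR u v * Real.log (1 - z)) * (OmegaR u v - 1 + 2 * v))
    / denPhi z u v

/-- The explicit function `Φ` solves the Riccati differential equation (3):
`Φ(0,u,v) = 1` and `∂Φ/∂z = v(1+u)Φ² + (1−v)/(1−z)²` at every `z ∈ [0,1)` where the
denominator of `Φ` is nonzero. -/
theorem Phi_solves_riccati (u v : ℝ) (hu : -1 < u)
    (hdisc : 0 < 1 - 4 * (1 + u) * v * (1 - v)) :
    PhiR 0 u v = 1 ∧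
    ∀ z ∈ Set.Ico (0 : ℝ) 1, denPhi z u v ≠ 0 →
      HasDerivAt (fun w => PhiR w u v)
        (v * (1 + u) * (PhiR z u v) ^ 2 + (1 - v) / (1 - z) ^ 2) z := by
  have hΩpos : 0 < OmegaR u v := Real.sqrt_pos.mpr hdisc
  have hΩ2 : (OmegaR u v) ^ 2 = 1 - 4 * (1 + u) * v * (1 - v) :=
    Real.sq_sqrt hdisc.le
  set Ω := OmegaR u v with hΩdef
  constructor
  · simp only [PhiR, denPhi]
    norm_num
    exact hΩpos.ne'
  · rintro z ⟨hz0, hz1⟩ hden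
    have hw : (0:ℝ) < 1 - z := by linarith
    have h1z : (1:ℝ) - z ≠ 0 := ne_of_gt hw
    set e := Real.exp (Ω * Real.log (1 - z)) with hedef
    have hCF : Ω + 1 - 2 * v * (1 + u) + e * (Ω - 1 + 2 * v * (1 + u)) ≠ 0 := by
      intro h
      apply hden
      simp only [denPhi, ← hΩdef, ← hedef, h, zero_mul]
    have h1 : HasDerivAt (fun w : ℝ => 1 - w) (-1) z := by
      simpa using (hasDerivAt_id z).const_sub 1
    have h2 : HasDerivAt (fun w : ℝ => Real.log (1 - w)) (-1 / (1 - z)) z :=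
      h1.log h1z
    have h3 : HasDerivAt (fun w : ℝ => Ω * Real.log (1 - w)) (Ω * (-1 / (1 - z))) z :=
      h2.const_mul Ω
    have h4 : HasDerivAt (fun w : ℝ => Real.exp (Ω * Real.log (1 - w)))
        (e * (Ω * (-1 / (1 - z)))) z := by
      simpa [← hedef, mul_comm] using h3.exp
    have hN : HasDerivAt (fun w : ℝ => Ω + 1 - 2 * v
        + Real.exp (Ω * Real.log (1 - w)) * (Ω - 1 + 2 * v))
        (e * (Ω * (-1 / (1 - z))) * (Ω - 1 + 2 * v)) z := by
      have := (h4.mul_const (Ω - 1 + 2 * v)).const_add (Ω + 1 - 2 * v)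
      convert this using 2 with w
    have hInner : HasDerivAt (fun w : ℝ => Ω + 1 - 2 * v * (1 + u)
        + Real.exp (Ω * Real.log (1 - w)) * (Ω - 1 + 2 * v * (1 + u)))
        (e * (Ω * (-1 / (1 - z))) * (Ω - 1 + 2 * v * (1 + u))) z := by
      have := (h4.mul_const (Ω - 1 + 2 * v * (1 + u))).const_add (Ω + 1 - 2 * v * (1 + u))
      convert this using 2 with w
    have hD : HasDerivAt (fun w : ℝ => denPhi w u v)
        (e * (Ω * (-1 / (1 - z))) * (Ω - 1 + 2 * v * (1 + u)) * (1 - z)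
          + (Ω + 1 - 2 * v * (1 + u) + e * (Ω - 1 + 2 * v * (1 + u))) * (-1)) z := by
      exact hInner.mul h1
    have hden' : denPhi z u v ≠ 0 := hden
    have hPhi := hN.div hD hden'
    have hfun : (fun w : ℝ => PhiR w u v) = fun w => (Ω + 1 - 2 * v
        + Real.exp (Ω * Real.log (1 - w)) * (Ω - 1 + 2 * v)) / denPhi w u v := by
      funext w; rfl
    rw [hfun]
    refine hPhi.congr_deriv (Eq.symm ?_)
    have hdz : denPhi z u v = (Ω + 1 - 2 * v * (1 + u) + e * (Ω - 1 + 2 * v * (1 + u))) * (1 - z) := by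
      simp [denPhi, ← hΩdef, ← hedef]
    rw [PhiR, hdz, ← hedef]
    set N := Ω + 1 - 2 * v + e * (Ω - 1 + 2 * v) with hNdef
    set C := Ω + 1 - 2 * v * (1 + u) + e * (Ω - 1 + 2 * v * (1 + u)) with hCdef
    have hkey : e * (Ω * (-1 / (1 - z))) * (Ω - 1 + 2 * v) * (C * (1 - z)) -
        N * (e * (Ω * (-1 / (1 - z))) * (Ω - 1 + 2 * v * (1 + u)) * (1 - z) + C * -1)
        = v * (1 + u) * N ^ 2 + (1 - v) * C ^ 2 := by
      simp only [hNdef, hCdef]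
      field_simp
      linear_combination (v - v * (1 + u)) * (1 - e) ^ 2 * hΩ2
    rw [hkey]
    field_simp
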